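/- Let f, g : S¹ → S¹ be monotone continuous maps that are homotopic. Then there exists a monotone homotopy H : S¹ × [0,1] → S¹ with H(·,0) = f and H(·,1) = g; that is, H is continuous, H⁻¹({w}) is connected for every w ∈ S¹, and H restricts to f and g on the two ends of the cylinder. -/

import Mathlib

open Set unitInterval Complex

noncomputable section
namespace MonCirc
set_option linter.unusedSectionVars false

/-- shorthand -/
def ee (x : ℝ) : Circle := Circle.exp x

lemma ee_cont : Continuous ee := Circle.exp.continuous

lemma ee_eq_iff {x y : ℝ} : ee x = ee y ↔ ∃ m : ℤ, x = y + m * (2 * Real.pi) :=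
  Circle.exp_eq_exp

lemma ee_arg (z : Circle) : ee (Complex.arg z) = z := Circle.exp_arg z

lemma ee_surj : Function.Surjective ee := fun z => ⟨Complex.arg z, ee_arg z⟩

lemma ee_add (x y : ℝ) : ee (x + y) = ee x * ee y := Circle.exp_add x y

lemma ee_periodic (x : ℝ) : ee (x + 2 * Real.pi) = ee x := Circle.exp_add_two_pi x

lemma ee_zero : ee 0 = 1 := Circle.exp_zero

lemma ee_neg (x : ℝ) : ee (-x) = (ee x)⁻¹ := Circle.exp_neg x

lemma ee_int (x : ℝ) (m : ℤ) : ee (x + m * (2 * Real.pi)) = ee x :=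
  ee_eq_iff.2 ⟨m, rfl⟩

/-- a point of the circle different from `-1` lies in the slit plane -/
lemma circ_mem_slitPlane {z : Circle} (h : (z : ℂ) ≠ -1) : (z : ℂ) ∈ slitPlane := by
  rw [Complex.mem_slitPlane_iff]
  by_cases him : (z : ℂ).im = 0
  · left
    have h2 : (z : ℂ).re ^ 2 = 1 := by
      have := Circle.normSq_coe z
      rw [Complex.normSq_apply] at this
      nlinarith
    have hre : (z : ℂ).re ≠ -1 := by
      intro hre
      exact h (Complex.ext (by simpa using hre) (by simpa using him))
    have : ((z:ℂ).re - 1) * ((z:ℂ).re + 1) = 0 := by nlinarith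
    rcases mul_eq_zero.1 this with h1 | h1
    · nlinarith
    · exact absurd (by linarith) hre
  · right; exact him

lemma dist_lt_two_ne_neg {z w : Circle} (h : dist z w < 2) : (z : ℂ) ≠ -(w : ℂ) := by
  intro he
  rw [show dist z w = dist (z:ℂ) (w:ℂ) from rfl, dist_eq_norm, he] at h
  have h2 : ‖-(w:ℂ) - w‖ = 2 := by
    rw [show -(w:ℂ) - w = -(2*w) by ring, norm_neg, norm_mul]
    simp [Circle.norm_coe]
  linarith

lemma ratio_slitPlane {z w : Circle} (h : (z : ℂ) ≠ -(w:ℂ)) : ((z / w : Circle) : ℂ) ∈ slitPlane := by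
  apply circ_mem_slitPlane
  rw [Circle.coe_div]
  intro he
  apply h
  field_simp at he
  linear_combination he


lemma circ_cancel1 (a b c : Circle) : a / b * (c / a) = c / b := by
  apply Circle.coe_injective
  push_cast
  field_simp

lemma circ_cancel2 (a b : Circle) : a * (b / a) = b := by
  apply Circle.coe_injective
  push_cast
  field_simp

section Lift
variable (φ : ℝ → Circle) (δ : ℝ)

/-- increment of the argument over the `i`-th subdivision step, clamped at `x`. -/
def term (i : ℕ) (x : ℝ) : ℝ :=
  Complex.arg ((φ (min x ((i+1)*δ)) / φ (min x (i*δ)) : Circle) : ℂ)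

def S (N : ℕ) (x : ℝ) : ℝ := ∑ i ∈ Finset.range N, term φ δ i x

def Fp (x : ℝ) : ℝ := S φ δ (⌈x/δ⌉₊ + 1) x

variable {φ δ}

lemma min_sub_min_abs_le {a b : ℝ} (x : ℝ) (hab : a ≤ b) : |min x b - min x a| ≤ b - a := by
  rw [abs_le]
  rcases le_total x a with h | h
  · rw [min_eq_left h, min_eq_left (h.trans hab)]
    constructor <;> linarith
  · rw [min_eq_right h]
    rcases le_total x b with h' | h'
    · rw [min_eq_left h']
      constructor <;> linarith
    · rw [min_eq_right h']
      constructor <;> linarith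

variable (hδpos : 0 < δ) (hδ : ∀ x y : ℝ, |x - y| ≤ δ → (φ x : ℂ) ≠ -(φ y : ℂ))

include hδpos hδ in
lemma term_ne (i : ℕ) (x : ℝ) : (φ (min x ((i+1)*δ)) : ℂ) ≠ -(φ (min x (i*δ)) : ℂ) := by
  apply hδ
  have : (i:ℝ)*δ ≤ (i+1)*δ := by nlinarith [hδpos.le]
  have h2 := min_sub_min_abs_le (a := (i:ℝ)*δ) (b := ((i:ℝ)+1)*δ) x this
  calc |min x ((↑i+1)*δ) - min x (↑i*δ)| ≤ (↑i+1)*δ - ↑i*δ := h2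
  _ = δ := by ring

include hδpos hδ in
lemma term_cont (hφ : Continuous φ) (i : ℕ) : Continuous (term φ δ i) := by
  rw [continuous_iff_continuousAt]
  intro x
  have hc : Continuous fun x => ((φ (min x ((i+1)*δ)) / φ (min x (i*δ)) : Circle) : ℂ) := by
    apply Continuous.subtype_val
    exact (hφ.comp (continuous_id.min continuous_const)).div'
      (hφ.comp (continuous_id.min continuous_const))
  unfold term
  have h1 : ContinuousAt Complex.arg ((φ (min x ((i+1)*δ)) / φ (min x (i*δ)) : Circle) : ℂ) :=
    Complex.continuousAt_arg (ratio_slitPlane (term_ne hδpos hδ i x))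
  exact ContinuousAt.comp (x := x)
    (f := fun y => ((φ (min y ((i+1)*δ)) / φ (min y (i*δ)) : Circle) : ℂ)) h1 hc.continuousAt

lemma term_eq_zero (i : ℕ) {x : ℝ} (h : x ≤ i*δ) (hδpos : 0 < δ) : term φ δ i x = 0 := by
  have h1 : min x ((i:ℝ)*δ) = x := min_eq_left h
  have h2 : min x (((i:ℝ)+1)*δ) = x := min_eq_left (by nlinarith [hδpos.le])
  rw [term, h1, h2, div_self']
  simp [Complex.arg_one]

include hδpos in
lemma S_stab {N M : ℕ} {x : ℝ} (h : x ≤ N*δ) (hNM : N ≤ M) : S φ δ M x = S φ δ N x := by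
  induction M, hNM using Nat.le_induction with
  | base => rfl
  | succ M hNM ih =>
      rw [S, Finset.sum_range_succ, ← S, ih]
      have : x ≤ (M:ℝ)*δ := h.trans (by
        have : (N:ℝ) ≤ M := by exact_mod_cast hNM
        nlinarith [hδpos.le])
      rw [term_eq_zero M this hδpos, add_zero]

include hδpos in
lemma x_le_ceil (x : ℝ) : x ≤ ((⌈x/δ⌉₊ + 1 : ℕ) : ℝ) * δ := by
  have h1 : x/δ ≤ (⌈x/δ⌉₊ : ℝ) := Nat.le_ceil _
  have : x/δ ≤ ((⌈x/δ⌉₊ + 1 : ℕ) : ℝ) := by push_cast; linarith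
  calc x = (x/δ) * δ := by field_simp
  _ ≤ _ := by nlinarith

include hδpos in
lemma Fp_eq {N : ℕ} {x : ℝ} (h : x ≤ N*δ) : Fp φ δ x = S φ δ N x := by
  rw [Fp]
  rcases le_total (⌈x/δ⌉₊ + 1) N with hle | hle
  · rw [S_stab hδpos (x_le_ceil hδpos x) hle]
  · rw [S_stab hδpos h hle]

include hδpos hδ in
lemma Fp_cont (hφ : Continuous φ) : Continuous (Fp φ δ) := by
  rw [continuous_iff_continuousAt]
  intro x₀
  set N := ⌈x₀/δ⌉₊ + 1 with hN
  have hx₀ : x₀ < (N:ℝ)*δ := by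
    have h1 : x₀/δ ≤ (⌈x₀/δ⌉₊ : ℝ) := Nat.le_ceil _
    have h2 : x₀ ≤ (⌈x₀/δ⌉₊:ℝ) * δ := by
      calc x₀ = (x₀/δ)*δ := by field_simp
      _ ≤ _ := by nlinarith
    rw [hN]; push_cast
    nlinarith
  have hSc : Continuous (S φ δ N) := continuous_finset_sum _ (fun i _ => term_cont hδpos hδ hφ i)
  apply hSc.continuousAt.congr
  have hop : IsOpen {x : ℝ | x < (N:ℝ)*δ} := isOpen_lt continuous_id continuous_const
  filter_upwards [hop.mem_nhds hx₀] with x hx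
  exact (Fp_eq hδpos hx.le).symm

omit hδ in
include hδpos in
lemma ee_S (N : ℕ) (x : ℝ) : ee (S φ δ N x) = φ (min x (N*δ)) / φ (min x 0) := by
  induction N with
  | zero => simp [S, ee_zero]
  | succ N ih =>
      rw [S, Finset.sum_range_succ, ← S, ee_add, ih]
      have h2 : ee (term φ δ N x) = φ (min x (((N:ℝ)+1)*δ)) / φ (min x ((N:ℝ)*δ)) := ee_arg _
      push_cast
      rw [h2, circ_cancel1]

include hδpos in
lemma ee_Fp {x : ℝ} (hx : 0 ≤ x) : ee (Fp φ δ x) = φ x / φ 0 := by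
  rw [Fp_eq hδpos (x_le_ceil hδpos x), ee_S hδpos]
  rw [min_eq_left (x_le_ceil hδpos x), min_eq_right hx]

include hδpos in
lemma Fp_zero : Fp φ δ 0 = 0 := by
  rw [Fp, S]
  apply Finset.sum_eq_zero
  intro i _
  exact term_eq_zero i (by positivity) hδpos

include hδpos hδ in
/-- existence of a continuous lift of a "uniformly non-antipodal-at-scale-δ" map to the circle -/
lemma lift_exists (hφ : Continuous φ) : ∃ F : ℝ → ℝ, Continuous F ∧ ∀ x, ee (F x) = φ x := by
  set ψ : ℝ → Circle := fun x => φ (-x) with hψ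
  have hψc : Continuous ψ := hφ.comp continuous_neg
  have hψδ : ∀ x y : ℝ, |x - y| ≤ δ → (ψ x : ℂ) ≠ -(ψ y : ℂ) := by
    intro x y hxy
    apply hδ
    rw [show -x - -y = -(x-y) by ring, abs_neg]
    exact hxy
  refine ⟨fun x => Complex.arg (φ 0) + if (0:ℝ) ≤ x then Fp φ δ x else Fp ψ δ (-x), ?_, ?_⟩
  · apply continuous_const.add
    have h0 : ∀ x : ℝ, (0:ℝ) = x → Fp φ δ x = Fp ψ δ (-x) := by
      rintro x rfl
      rw [neg_zero, Fp_zero hδpos, Fp_zero hδpos]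
    exact Continuous.if_le (Fp_cont hδpos hδ hφ) ((Fp_cont hδpos hψδ hψc).comp continuous_neg)
      continuous_const continuous_id h0
  · intro x
    dsimp only
    by_cases hx : (0:ℝ) ≤ x
    · rw [if_pos hx, ee_add, ee_arg, ee_Fp hδpos hx, circ_cancel2]
    · rw [if_neg hx, ee_add, ee_arg, ee_Fp hδpos (by linarith [lt_of_not_ge hx])]
      have : ψ (-x) = φ x := by rw [hψ]; simp
      rw [this, hψ]
      simp only [neg_zero]
      rw [circ_cancel2]

end Lift

lemma two_pi_pos : (0:ℝ) < 2 * Real.pi := by positivity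

/-- distinct reals within `2π` give distinct circle points -/
lemma ee_ne_of {x y : ℝ} (h1 : x ≠ y) (h2 : |x - y| < 2*Real.pi) : ee x ≠ ee y := by
  intro he
  obtain ⟨m, hm⟩ := ee_eq_iff.1 he
  have hm0 : m ≠ 0 := by rintro rfl; simp at hm; exact h1 hm
  have h3 : (1:ℝ) ≤ |(m:ℝ)| := by
    have h0 : (0:ℤ) < |m| := abs_pos.2 hm0
    have : (1:ℤ) ≤ |m| := by omega
    exact_mod_cast this
  have h4 : |x - y| = |(m:ℝ)| * (2*Real.pi) := by
    rw [hm]; rw [show y + m*(2*Real.pi) - y = m * (2*Real.pi) by ring]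
    rw [abs_mul, _root_.abs_of_nonneg two_pi_pos.le]
  nlinarith [two_pi_pos]

/-- points differing by an odd multiple of `π` are distinct on the circle -/
lemma ee_ne_odd (x : ℝ) (k : ℤ) : ee (x + (2*k+1)*Real.pi) ≠ ee x := by
  intro he
  obtain ⟨m, hm⟩ := ee_eq_iff.1 he
  have h1 : ((2*k+1 : ℤ):ℝ) * Real.pi = ((2*m : ℤ):ℝ) * Real.pi := by push_cast; linarith [hm]
  have h2 : (2*k+1 : ℤ) = 2*m := by
    have := mul_right_cancel₀ Real.pi_ne_zero h1
    exact_mod_cast this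
  omega

/-- key separation lemma: two fiber points separated by two non-fiber points on the circle
disconnect the fiber -/
lemma sep {h : Circle → Circle} {w : Circle} {s s' u u' : ℝ}
    (h1 : s < u) (h2 : u < s') (h3 : s' < u') (h4 : u' < s + 2*Real.pi)
    (hu : h (ee u) = w) (hu' : h (ee u') = w)
    (hs : h (ee s) ≠ w) (hs' : h (ee s') ≠ w) :
    ¬ IsPreconnected (h ⁻¹' {w}) := by
  intro hpc
  have hopen : IsOpenMap ee := isLocalHomeomorph_circleExp.isOpenMap
  set U := ee '' (Ioo s s') with hU
  set V := ee '' (Ioo s' (s + 2*Real.pi)) with hV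
  have hUopen : IsOpen U := hopen _ isOpen_Ioo
  have hVopen : IsOpen V := hopen _ isOpen_Ioo
  have hcov : h ⁻¹' {w} ⊆ U ∪ V := by
    intro z hz
    have hzw : h z = w := hz
    set r := toIcoMod two_pi_pos s (Complex.arg z) with hr
    have hmem : r ∈ Ico s (s + 2*Real.pi) := toIcoMod_mem_Ico _ _ _
    have heer : ee r = z := by
      have hsub : Complex.arg z - r = toIcoDiv two_pi_pos s (Complex.arg z) • (2*Real.pi) :=
        self_sub_toIcoMod _ _ _
      have hrw : r = Complex.arg z + ((-(toIcoDiv two_pi_pos s (Complex.arg z)) : ℤ) : ℝ) * (2*Real.pi) := by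
        rw [zsmul_eq_mul] at hsub
        push_cast
        linarith
      rw [hrw, ee_int, ee_arg]
    have hrs : r ≠ s := by
      intro hrr
      rw [hrr] at heer; rw [heer] at hs; exact hs hzw
    have hrs' : r ≠ s' := by
      intro hrr
      rw [hrr] at heer; rw [heer] at hs'; exact hs' hzw
    rcases lt_or_ge r s' with hlt | hle
    · left; exact ⟨r, ⟨lt_of_le_of_ne hmem.1 (Ne.symm hrs), hlt⟩, heer⟩
    · right; exact ⟨r, ⟨lt_of_le_of_ne hle (Ne.symm hrs'), hmem.2⟩, heer⟩
  have hdisj : U ∩ V = ∅ := by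
    ext z
    simp only [mem_inter_iff, mem_empty_iff_false, iff_false, not_and]
    rintro ⟨a, ha, rfl⟩ ⟨b, hb, hab⟩
    obtain ⟨m, hm⟩ := ee_eq_iff.1 hab.symm
    have hb1 : -(2*Real.pi) < (m:ℝ)*(2*Real.pi) := by
      have := ha.1; have := ha.2; have := hb.1; have := hb.2; nlinarith
    have hb2 : (m:ℝ)*(2*Real.pi) < 0 := by
      have := ha.1; have := ha.2; have := hb.1; have := hb.2; nlinarith
    have hm1 : (-1:ℝ) < (m:ℝ) := by nlinarith [two_pi_pos]
    have hm2 : ((m:ℝ)) < 0 := by nlinarith [two_pi_pos]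
    have : (-1:ℤ) < m ∧ m < 0 := ⟨by exact_mod_cast hm1, by exact_mod_cast hm2⟩
    omega
  obtain ⟨z0, hz0⟩ := hpc U V hUopen hVopen hcov
    ⟨ee u, by simp only [mem_inter_iff, mem_preimage, mem_singleton_iff]; exact ⟨hu, ⟨u, ⟨h1, h2⟩, rfl⟩⟩⟩
    ⟨ee u', by simp only [mem_inter_iff, mem_preimage, mem_singleton_iff]; exact ⟨hu', ⟨u', ⟨h3, h4⟩, rfl⟩⟩⟩
  rw [hdisj] at hz0
  simpa using hz0.2

lemma shift_nat {L : ℝ → ℝ} {c : ℝ} (h : ∀ x, L (x + 2*Real.pi) = L x + c) :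
    ∀ (k : ℕ) (x : ℝ), L (x + k*(2*Real.pi)) = L x + k*c := by
  intro k
  induction k with
  | zero => simp
  | succ k ih =>
      intro x
      push_cast
      rw [show x + ((k:ℝ)+1)*(2*Real.pi) = (x + (k:ℝ)*(2*Real.pi)) + 2*Real.pi by ring, h, ih x]
      ring

lemma shift_nat_neg {L : ℝ → ℝ} {c : ℝ} (h : ∀ x, L (x + 2*Real.pi) = L x + c) :
    ∀ (k : ℕ) (x : ℝ), L (x - k*(2*Real.pi)) = L x - k*c := by
  intro k
  induction k with
  | zero => simp
  | succ k ih =>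
      intro x
      have h1 := h (x - ((k:ℝ)+1)*(2*Real.pi))
      rw [show x - ((k:ℝ)+1)*(2*Real.pi) + 2*Real.pi = x - (k:ℝ)*(2*Real.pi) by ring] at h1
      have h2 := ih x
      push_cast
      linarith [h1, h2]

/-- a continuous shift-by-`c` map satisfies the shift identity for all integer multiples -/
lemma shift_int {L : ℝ → ℝ} {c : ℝ} (h : ∀ x, L (x + 2*Real.pi) = L x + c) :
    ∀ (n : ℤ) (x : ℝ), L (x + n*(2*Real.pi)) = L x + n*c := by
  intro n x
  obtain ⟨k, hk | hk⟩ := Int.eq_nat_or_neg n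
  · subst hk
    push_cast
    exact shift_nat h k x
  · subst hk
    push_cast
    rw [show x + -(k:ℝ)*(2*Real.pi) = x - (k:ℝ)*(2*Real.pi) by ring, shift_nat_neg h k x]
    ring

/-- shift constant of a lift of a `2π`-periodic circle-valued map -/
lemma shift_const {L : ℝ → ℝ} (hL : Continuous L)
    (h : ∀ x, ee (L (x + 2*Real.pi)) = ee (L x)) :
    ∃ c : ℝ, (∃ m : ℤ, c = m * (2*Real.pi)) ∧ ∀ x, L (x + 2*Real.pi) = L x + c := by
  set g : ℝ → ℝ := fun x => L (x + 2*Real.pi) - L x with hg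
  have hgc : Continuous g := (hL.comp (continuous_id.add continuous_const)).sub hL
  have hz : ∀ x, ∃ m : ℤ, g x = m * (2*Real.pi) := by
    intro x
    obtain ⟨m, hm⟩ := ee_eq_iff.1 (h x)
    exact ⟨m, by rw [hg]; simp only; linarith⟩
  have key : ∀ a b : ℝ, g a < g b → False := by
    intro a b hab
    obtain ⟨ma, hma⟩ := hz a
    obtain ⟨mb, hmb⟩ := hz b
    have hmm : ma < mb := by
      have : (ma:ℝ) * (2*Real.pi) < (mb:ℝ)*(2*Real.pi) := by rw [← hma, ← hmb]; exact hab
      have : (ma:ℝ) < mb := by nlinarith [two_pi_pos]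
      exact_mod_cast this
    have hv : (ma:ℝ)*(2*Real.pi) + Real.pi ∈ Icc (g a) (g b) := by
      constructor
      · rw [hma]; nlinarith [Real.pi_pos]
      · rw [hmb]
        have : (ma:ℝ) + 1 ≤ mb := by exact_mod_cast hmm
        nlinarith [Real.pi_pos]
    obtain ⟨y, hy⟩ := intermediate_value_univ a b hgc hv
    obtain ⟨m', hm'⟩ := hz y
    rw [hy] at hm'
    have h1 : ((2*ma+1 : ℤ):ℝ) * Real.pi = ((2*m' : ℤ):ℝ) * Real.pi := by push_cast; linarith
    have h2 : (2*ma+1 : ℤ) = 2*m' := by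
      have := mul_right_cancel₀ Real.pi_ne_zero h1
      exact_mod_cast this
    omega
  have hconst : ∀ x, g x = g 0 := by
    intro x
    rcases lt_trichotomy (g x) (g 0) with hlt | heq | hgt
    · exact absurd (key x 0 hlt) (by simp)
    · exact heq
    · exact absurd (key 0 x hgt) (by simp)
  refine ⟨g 0, hz 0, fun x => ?_⟩
  have h1 := hconst x
  have h2 : g 0 = L (0 + 2*Real.pi) - L 0 := rfl
  have h3 : g x = L (x + 2*Real.pi) - L x := rfl
  rw [h3, h2] at h1
  linarith

/-- a lift with shift `2π` of a circle map with connected fibers is monotone -/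
lemma lift_mono {h : Circle → Circle} (hm : ∀ w, IsPreconnected (h ⁻¹' {w}))
    {F : ℝ → ℝ} (hFc : Continuous F) (hF : ∀ x, ee (F x) = h (ee x))
    (hsh : ∀ x, F (x + 2*Real.pi) = F x + 2*Real.pi) : Monotone F := by
  have loc : ∀ a b : ℝ, a ≤ b → b ≤ a + 2*Real.pi → F a ≤ F b := by
    intro a b hab hba
    by_contra hFb
    push_neg at hFb
    have hab' : a < b := by
      rcases eq_or_lt_of_le hab with rfl | hlt
      · exact absurd hFb (lt_irrefl _)
      · exact hlt
    have hba' : b < a + 2*Real.pi := by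
      rcases eq_or_lt_of_le hba with heq | hlt
      · exfalso; rw [heq, hsh] at hFb; linarith [Real.pi_pos]
      · exact hlt
    set A := F a with hA
    have hIv : Ioo (F b) (F (a + 2*Real.pi)) ⊆ F '' (Ioo b (a+2*Real.pi)) :=
      intermediate_value_Ioo hba'.le hFc.continuousOn
    obtain ⟨v, hv, hFv⟩ := hIv (by rw [hsh]; exact ⟨hFb, by linarith [two_pi_pos]⟩)
    set m' := max (F b) (A - 2*Real.pi) with hm'
    have hmA : m' < A := max_lt hFb (by linarith [two_pi_pos])
    set y' := (m' + A)/2 with hy'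
    have hy1 : F b < y' := by
      have : F b ≤ m' := le_max_left _ _
      rw [hy']; linarith
    have hy2 : y' < A := by rw [hy']; linarith
    have hy3 : A - 2*Real.pi < y' := by
      have : A - 2*Real.pi ≤ m' := le_max_right _ _
      rw [hy']; linarith
    have hIs : Ioo (F b) (F a) ⊆ F '' (Ioo a b) := intermediate_value_Ioo' hab'.le hFc.continuousOn
    obtain ⟨s, hsmem, hFs⟩ := hIs ⟨hy1, hy2⟩
    have hIs' : Ioo (F v) (F (a + 2*Real.pi)) ⊆ F '' (Ioo v (a+2*Real.pi)) :=
      intermediate_value_Ioo (by linarith [hv.2]) hFc.continuousOn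
    obtain ⟨s', hs'mem, hFs'⟩ := hIs' (show A + Real.pi ∈ Ioo (F v) (F (a + 2*Real.pi)) by
      rw [hFv, hsh]; constructor <;> linarith [Real.pi_pos])
    refine sep (h := h) (w := ee A) (s := s) (u := v) (s' := s') (u' := a + 2*Real.pi)
      ?_ ?_ ?_ ?_ ?_ ?_ ?_ ?_ (hm (ee A))
    · exact lt_trans hsmem.2 hv.1
    · exact hs'mem.1
    · exact hs'mem.2
    · linarith [hsmem.1]
    · rw [← hF, hFv]
    · rw [← hF, hsh, ← hA, ee_periodic]
    · rw [← hF, hFs]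
      apply ee_ne_of
      · intro he; rw [he] at hy2; exact lt_irrefl _ hy2
      · rw [abs_sub_lt_iff]; constructor <;> linarith [two_pi_pos]
    · rw [← hF, hFs']
      have := ee_ne_odd A 0
      simpa using this
  intro a b hab
  set n := ⌊(b - a)/(2*Real.pi)⌋₊ with hn
  have hn1 : (n:ℝ) ≤ (b-a)/(2*Real.pi) := Nat.floor_le (div_nonneg (by linarith) two_pi_pos.le)
  have hn2 : (b-a)/(2*Real.pi) < n + 1 := Nat.lt_floor_add_one _
  have h1 : a + (n:ℝ)*(2*Real.pi) ≤ b := by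
    have := (le_div_iff₀ two_pi_pos).1 hn1
    linarith
  have h2 : b ≤ a + (n:ℝ)*(2*Real.pi) + 2*Real.pi := by
    have := (div_lt_iff₀ two_pi_pos).1 hn2
    linarith
  have h3 : F (a + (n:ℝ)*(2*Real.pi)) = F a + (n:ℝ)*(2*Real.pi) := by
    have := shift_int hsh (n : ℤ) a
    push_cast at this
    exact this
  have h4 := loc (a + (n:ℝ)*(2*Real.pi)) b h1 (by linarith)
  have h5 : (0:ℝ) ≤ (n:ℝ)*(2*Real.pi) := by positivity
  linarith

/-- a lift with shift `0` of a circle map with connected fibers forces the map constant -/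
lemma lift_const {h : Circle → Circle} (hm : ∀ w, IsPreconnected (h ⁻¹' {w}))
    {F : ℝ → ℝ} (hFc : Continuous F) (hF : ∀ x, ee (F x) = h (ee x))
    (hsh : ∀ x, F (x + 2*Real.pi) = F x) : ∀ z, h z = h 1 := by
  have hper : ∀ (n : ℤ) (x : ℝ), F (x + n*(2*Real.pi)) = F x := by
    intro n x
    have := shift_int (c := 0) (by simpa using hsh) n x
    simpa using this
  have hFconst : ∀ x, F x = F 0 := by
    by_contra hne
    push_neg at hne
    obtain ⟨x₀, hx₀⟩ := hne
    obtain ⟨xm, hxm, hminOn⟩ := isCompact_Icc.exists_isMinOn (s := Icc (0:ℝ) (2*Real.pi))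
      (Set.nonempty_Icc.2 two_pi_pos.le) hFc.continuousOn
    obtain ⟨xM, hxM, hmaxOn⟩ := isCompact_Icc.exists_isMaxOn (s := Icc (0:ℝ) (2*Real.pi))
      (Set.nonempty_Icc.2 two_pi_pos.le) hFc.continuousOn
    set mv := F xm with hmv
    set Mv := F xM with hMv
    -- F x₀ is attained in the interval
    have hr : ∃ r ∈ Icc (0:ℝ) (2*Real.pi), F r = F x₀ := by
      set r := toIcoMod two_pi_pos 0 x₀ with hrdef
      have hmem : r ∈ Ico (0:ℝ) (0 + 2*Real.pi) := toIcoMod_mem_Ico _ _ _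
      have hsub : x₀ - r = toIcoDiv two_pi_pos 0 x₀ • (2*Real.pi) := self_sub_toIcoMod _ _ _
      refine ⟨r, ⟨hmem.1, by have := hmem.2; linarith⟩, ?_⟩
      have hxr : x₀ = r + ((toIcoDiv two_pi_pos 0 x₀ : ℤ) : ℝ) * (2*Real.pi) := by
        rw [zsmul_eq_mul] at hsub; linarith
      rw [hxr, hper]
    obtain ⟨r, hrmem, hrF⟩ := hr
    have hmM : mv < Mv := by
      rcases lt_or_ge mv Mv with hlt | hle
      · exact hlt
      · exfalso
        have h1 : F r = F 0 := by
          have := hminOn hrmem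
          have := hmaxOn hrmem
          have := hminOn (show (0:ℝ) ∈ Icc 0 (2*Real.pi) from ⟨le_refl _, two_pi_pos.le⟩)
          have := hmaxOn (show (0:ℝ) ∈ Icc 0 (2*Real.pi) from ⟨le_refl _, two_pi_pos.le⟩)
          simp only [IsMinOn, IsMaxOn, mem_setOf_eq] at *
          linarith
        rw [hrF] at h1
        exact hx₀ h1
    -- choose y
    set c' := min Mv (mv + 2*Real.pi) with hc'
    have hc1 : mv < c' := lt_min hmM (by linarith [two_pi_pos])
    set y₁ := mv + (c' - mv)/3 with hy₁
    set y₂ := mv + 2*(c' - mv)/3 with hy₂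
    have hy12 : y₁ ≠ y₂ := by rw [hy₁, hy₂]; intro hh; nlinarith
    clear_value mv Mv c' y₁ y₂
    have hyd : |y₁ - y₂| < 2*Real.pi := by
      have hd : y₁ - y₂ = -((c' - mv)/3) := by rw [hy₁, hy₂]; ring
      have hcu : c' ≤ mv + 2*Real.pi := by rw [hc']; exact min_le_right _ _
      rw [abs_sub_lt_iff]
      constructor <;> linarith [two_pi_pos, hc1, hd, hcu]
    have hkey : ∃ y, mv < y ∧ y < c' ∧ ee y ≠ ee Mv := by
      by_cases h1 : ee y₁ = ee Mv
      · refine ⟨y₂, by nlinarith, by nlinarith, ?_⟩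
        intro h2
        exact ee_ne_of hy12 hyd (h1.trans h2.symm)
      · exact ⟨y₁, by nlinarith, by nlinarith, h1⟩
    obtain ⟨y, hy1, hy2, hyM⟩ := hkey
    have hym : ee y ≠ ee mv := by
      apply ee_ne_of
      · intro hh; rw [hh] at hy1; exact lt_irrefl _ hy1
      · have hcu : c' ≤ mv + 2*Real.pi := by rw [hc']; exact min_le_right _ _
        rw [abs_sub_lt_iff]
        constructor <;> linarith [two_pi_pos]
    have hyMlt : y < Mv := lt_of_lt_of_le hy2 (by rw [hc']; exact min_le_left _ _)
    -- find xM' with xm < xM' < xm + 2π and F xM' = Mv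
    have hFxmne : F xm ≠ F xM := by rw [← hmv, ← hMv]; exact ne_of_lt hmM
    obtain ⟨xM', hxM'1, hxM'2, hxM'F⟩ :
        ∃ xM' : ℝ, xm < xM' ∧ xM' < xm + 2*Real.pi ∧ F xM' = Mv := by
      rcases lt_or_ge xm xM with hlt | hle
      · refine ⟨xM, hlt, ?_, hMv.symm⟩
        by_contra hcon
        push_neg at hcon
        have hxMeq : xM = 2*Real.pi := le_antisymm hxM.2 (by linarith [hxm.1])
        have hxmeq : xm = 0 := by linarith [hxm.1, hxM.2]
        apply hFxmne
        rw [hxMeq, hxmeq]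
        have := hsh 0
        simpa using this.symm
      · have hlt : xM < xm := by
          rcases eq_or_lt_of_le hle with heq | hlt
          · exfalso; apply hFxmne; rw [heq]
          · exact hlt
        have hxmlt : xm < xM + 2*Real.pi := by
          rcases lt_or_ge xm (2*Real.pi) with h2 | h2
          · linarith [hxM.1]
          · have hxm2 : xm = 2*Real.pi := le_antisymm hxm.2 h2
            rcases lt_or_ge 0 xM with h3 | h3
            · linarith
            · have hxM0 : xM = 0 := le_antisymm h3 hxM.1
              exfalso
              apply hFxmne
              rw [hxm2, hxM0]
              have := hsh 0
              simpa using this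
        exact ⟨xM + 2*Real.pi, hxmlt, by linarith, by rw [hsh, hMv]⟩
    -- IVT up and down
    obtain ⟨u, humem, huF⟩ : ∃ u ∈ Ioo xm xM', F u = y := by
      have := intermediate_value_Ioo hxM'1.le hFc.continuousOn
      exact this (by rw [hxM'F, ← hmv]; exact ⟨hy1, hyMlt⟩)
    obtain ⟨u', hu'mem, hu'F⟩ : ∃ u' ∈ Ioo xM' (xm + 2*Real.pi), F u' = y := by
      have := intermediate_value_Ioo' hxM'2.le hFc.continuousOn
      apply this
      rw [hxM'F, hsh, ← hmv]
      exact ⟨hy1, hyMlt⟩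
    exact sep (h := h) (w := ee y) (s := xm) (u := u) (s' := xM') (u' := u')
      humem.1 humem.2 hu'mem.1 hu'mem.2
      (by rw [← hF, huF]) (by rw [← hF, hu'F])
      (by rw [← hF, ← hmv]; exact fun hh => hym hh.symm)
      (by rw [← hF, hxM'F]; exact fun hh => hyM hh.symm)
      (hm (ee y))
  intro z
  calc h z = h (ee (Complex.arg z)) := by rw [ee_arg]
  _ = ee (F (Complex.arg z)) := (hF _).symm
  _ = ee (F 0) := by rw [hFconst]
  _ = h (ee 0) := hF 0
  _ = h 1 := by rw [ee_zero]

/-- a lift of a circle map with connected fibers cannot have shift `≥ 4π` -/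
lemma lift_not_big {h : Circle → Circle} (hm : ∀ w, IsPreconnected (h ⁻¹' {w}))
    {F : ℝ → ℝ} (hFc : Continuous F) (hF : ∀ x, ee (F x) = h (ee x))
    {c : ℝ} (hsh : ∀ x, F (x + 2*Real.pi) = F x + c)
    (hcm : ∃ m : ℤ, c = m * (2*Real.pi)) (hc : 4*Real.pi ≤ c) : False := by
  set y₀ := F 0 with hy₀
  have h2pi : F (2*Real.pi) = y₀ + c := by
    have := hsh 0
    rw [hy₀]
    simpa using this
  obtain ⟨x₁, hx₁mem, hx₁F⟩ : ∃ x₁ ∈ Ioo (0:ℝ) (2*Real.pi), F x₁ = y₀ + 2*Real.pi := by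
    have := intermediate_value_Ioo two_pi_pos.le hFc.continuousOn
    exact this (by rw [h2pi]; constructor <;> linarith [Real.pi_pos])
  obtain ⟨s, hsmem, hsF⟩ : ∃ s ∈ Ioo (0:ℝ) x₁, F s = y₀ + Real.pi := by
    have := intermediate_value_Ioo hx₁mem.1.le hFc.continuousOn
    exact this (by rw [hx₁F]; constructor <;> linarith [Real.pi_pos])
  obtain ⟨s', hs'mem, hs'F⟩ : ∃ s' ∈ Ioo x₁ (2*Real.pi), F s' = y₀ + 3*Real.pi := by
    have := intermediate_value_Ioo hx₁mem.2.le hFc.continuousOn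
    exact this (by rw [hx₁F, h2pi]; constructor <;> linarith [Real.pi_pos])
  obtain ⟨m, hmc⟩ := hcm
  exact sep (h := h) (w := ee y₀) (s := s) (u := x₁) (s' := s') (u' := 2*Real.pi)
    hsmem.2 hs'mem.1 hs'mem.2 (by linarith [hsmem.1])
    (by rw [← hF, hx₁F, ee_periodic])
    (by rw [← hF, h2pi, hmc, ee_int])
    (by rw [← hF, hsF]
        have := ee_ne_odd y₀ 0
        simpa using this)
    (by rw [← hF, hs'F]
        have := ee_ne_odd y₀ 1
        have h3 : y₀ + (2*(1:ℤ)+1)*Real.pi = y₀ + 3*Real.pi := by push_cast; ring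
        rw [h3] at this
        simpa using this)
    (hm (ee y₀))

/-- fibers of `z ↦ h z⁻¹` are preconnected if those of `h` are -/
lemma fiber_inv {h : Circle → Circle} (hm : ∀ w, IsPreconnected (h ⁻¹' {w})) :
    ∀ w, IsPreconnected ((fun z => h z⁻¹) ⁻¹' {w}) := by
  intro w
  have himg : (fun z : Circle => h z⁻¹) ⁻¹' {w} = Inv.inv '' (h ⁻¹' {w}) := by
    ext z
    simp only [mem_preimage, mem_singleton_iff, mem_image]
    constructor
    · intro hz; exact ⟨z⁻¹, hz, inv_inv z⟩
    · rintro ⟨a, ha, rfl⟩; simp only [inv_inv]; exact ha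
  rw [himg]
  exact (hm w).image _ continuous_inv.continuousOn

lemma dist_ee_le {x y : ℝ} (h : |x - y| ≤ 1) : dist (ee x) (ee y) ≤ 2*|x - y| := by
  have h1 : ee x = ee y * ee (x - y) := by rw [← ee_add]; congr 1; ring
  rw [show dist (ee x) (ee y) = dist (ee x : ℂ) (ee y : ℂ) from rfl, dist_eq_norm, h1]
  push_cast
  rw [show (ee y : ℂ) * (ee (x-y):ℂ) - (ee y:ℂ) = (ee y:ℂ) * ((ee (x-y):ℂ) - 1) by ring]
  rw [norm_mul]
  have h2 : ‖(ee y : ℂ)‖ = 1 := by rw [Circle.norm_coe]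
  rw [h2, one_mul]
  have h3 : (ee (x - y) : ℂ) = Complex.exp (((x - y : ℝ) : ℂ) * Complex.I) := Circle.coe_exp (x - y)
  rw [h3]
  have h4 := Complex.norm_exp_sub_one_le (x := ((x-y : ℝ):ℂ) * Complex.I)
    (by rw [norm_mul, Complex.norm_I, mul_one, Complex.norm_real, Real.norm_eq_abs]; exact h)
  calc ‖Complex.exp (((x-y:ℝ):ℂ)*Complex.I) - 1‖ ≤ 2 * ‖((x-y:ℝ):ℂ)*Complex.I‖ := h4
  _ = 2*|x-y| := by rw [norm_mul, Complex.norm_I, mul_one, Complex.norm_real, Real.norm_eq_abs]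

/-- uniform non-antipodality scale for a continuous self-map of the circle -/
lemma exists_delta {f : Circle → Circle} (hfc : Continuous f) :
    ∃ δ : ℝ, 0 < δ ∧ ∀ x y : ℝ, |x - y| ≤ δ → ((f (ee x) : ℂ)) ≠ -((f (ee y) : ℂ)) := by
  have huc : UniformContinuous f := CompactSpace.uniformContinuous_of_continuous hfc
  obtain ⟨η, hη, hP⟩ := Metric.uniformContinuous_iff.1 huc 2 (by norm_num)
  refine ⟨min (η/4) 1, by positivity, ?_⟩
  intro x y hxy
  have hxy1 : |x - y| ≤ 1 := hxy.trans (min_le_right _ _)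
  apply dist_lt_two_ne_neg
  apply hP
  calc dist (ee x) (ee y) ≤ 2*|x - y| := dist_ee_le hxy1
  _ ≤ 2 * min (η/4) 1 := by nlinarith [abs_nonneg (x-y), hxy]
  _ < η := by
      have : min (η/4) 1 ≤ η/4 := min_le_left _ _
      linarith

/-- transfer a lift along a homotopy, keeping the shift constant -/
lemma chain {f g : Circle → Circle} {K : Circle × unitInterval → Circle}
    (hKc : Continuous K) (hK0 : ∀ z, K (z, 0) = f z) (hK1 : ∀ z, K (z, 1) = g z)
    {F : ℝ → ℝ} {c : ℝ} (hFc : Continuous F) (hF : ∀ x, ee (F x) = f (ee x))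
    (hsh : ∀ x, F (x + 2*Real.pi) = F x + c) :
    ∃ G : ℝ → ℝ, Continuous G ∧ (∀ x, ee (G x) = g (ee x)) ∧
      ∀ x, G (x + 2*Real.pi) = G x + c := by
  have hucK : UniformContinuous K := CompactSpace.uniformContinuous_of_continuous hKc
  obtain ⟨η, hη, hP⟩ := Metric.uniformContinuous_iff.1 hucK 2 (by norm_num)
  obtain ⟨N, hN⟩ := exists_nat_gt (1/η)
  have hNpos : 0 < (N:ℝ) := lt_trans (by positivity) hN
  set ti : ℕ → unitInterval := fun i => Set.projIcc 0 1 zero_le_one ((i:ℝ)/N) with hti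
  have hti_val : ∀ i : ℕ, i ≤ N → (ti i : ℝ) = (i:ℝ)/N := by
    intro i hi
    rw [hti]
    simp only
    rw [Set.projIcc_of_mem]
    exact ⟨by positivity, by
      rw [div_le_one hNpos]; exact_mod_cast hi⟩
  have h1N : 1/(N:ℝ) < η := by
    rw [div_lt_iff₀ hNpos]
    rw [div_lt_iff₀ hη] at hN
    nlinarith
  have hQ : ∀ (i : ℕ), i + 1 ≤ N → ∀ z : Circle,
      ((K (z, ti (i+1)) : ℂ)) ≠ -((K (z, ti i) : ℂ)) := by
    intro i hi z
    apply dist_lt_two_ne_neg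
    apply hP
    rw [Prod.dist_eq]
    simp only [dist_self]
    rw [Subtype.dist_eq, Real.dist_eq, hti_val (i+1) hi, hti_val i (by omega)]
    rw [max_eq_right (abs_nonneg _)]
    push_cast
    rw [show ((i:ℝ)+1)/N - (i:ℝ)/N = 1/N by field_simp; ring]
    rw [abs_of_pos (by positivity)]
    exact h1N
  have key : ∀ i : ℕ, i ≤ N → ∃ L : ℝ → ℝ, Continuous L ∧
      (∀ x, ee (L x) = K (ee x, ti i)) ∧ (∀ x, L (x + 2*Real.pi) = L x + c) := by
    intro i
    induction i with
    | zero =>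
        intro _
        have hti0 : ti 0 = 0 := by
          apply Subtype.ext
          rw [hti_val 0 (by omega)]
          simp
        refine ⟨F, hFc, fun x => ?_, hsh⟩
        rw [hti0, hK0, hF]
    | succ i ih =>
        intro hi
        obtain ⟨L, hLc, hL, hLsh⟩ := ih (by omega)
        set D : ℝ → ℝ := fun x =>
          Complex.arg ((K (ee x, ti (i+1)) / K (ee x, ti i) : Circle) : ℂ) with hD
        have hDc : Continuous D := by
          rw [continuous_iff_continuousAt]
          intro x
          have hc2 : Continuous fun x => ((K (ee x, ti (i+1)) / K (ee x, ti i) : Circle) : ℂ) := by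
            apply Continuous.subtype_val
            exact ((hKc.comp ((ee_cont).prodMk continuous_const)).div'
              (hKc.comp ((ee_cont).prodMk continuous_const)))
          have h1 : ContinuousAt Complex.arg ((K (ee x, ti (i+1)) / K (ee x, ti i) : Circle) : ℂ) :=
            Complex.continuousAt_arg (ratio_slitPlane (hQ i hi (ee x)))
          exact ContinuousAt.comp (x := x)
            (f := fun x => ((K (ee x, ti (i+1)) / K (ee x, ti i) : Circle) : ℂ)) h1 hc2.continuousAt
        refine ⟨fun x => L x + D x, hLc.add hDc, fun x => ?_, fun x => ?_⟩
        · rw [ee_add, hL, hD]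
          simp only
          rw [ee_arg]
          exact circ_cancel2 _ _
        · simp only
          rw [hLsh, hD]
          simp only [ee_periodic]
          ring
  obtain ⟨G, h1, h2, h3⟩ := key N (le_refl N)
  have htiN : ti N = 1 := by
    apply Subtype.ext
    rw [hti_val N (le_refl N)]
    simp [div_self hNpos.ne']
  exact ⟨G, h1, fun x => by rw [h2 x, htiN, hK1], h3⟩

/-- a compact set in the cylinder with nonempty preconnected slices is preconnected -/
lemma preconn_of_slices {S : Set (Circle × unitInterval)} (hS : IsClosed S)
    (hne : ∀ t : unitInterval, ∃ z, (z, t) ∈ S)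
    (hsl : ∀ t : unitInterval, IsPreconnected {z : Circle | (z, t) ∈ S}) :
    IsPreconnected S := by
  intro U V hU hV hcov hne1 hne2
  by_contra hcon
  have hem : S ∩ (U ∩ V) = ∅ := not_nonempty_iff_eq_empty.1 hcon
  have hsplit : ∀ t : unitInterval, ∀ z z' : Circle,
      (z, t) ∈ S ∩ U → (z', t) ∈ S ∩ V → False := by
    intro t z z' hz hz'
    have hUo : IsOpen {a : Circle | (a, t) ∈ U} := hU.preimage (continuous_id.prodMk continuous_const)
    have hVo : IsOpen {a : Circle | (a, t) ∈ V} := hV.preimage (continuous_id.prodMk continuous_const)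
    obtain ⟨a, ha⟩ := hsl t {a : Circle | (a, t) ∈ U} {a : Circle | (a, t) ∈ V} hUo hVo
      (fun a haS => hcov haS) ⟨z, hz.1, hz.2⟩ ⟨z', hz'.1, hz'.2⟩
    have : (a, t) ∈ S ∩ (U ∩ V) := ⟨ha.1, ha.2.1, ha.2.2⟩
    rw [hem] at this
    exact this
  have hSU : S ∩ U = S \ V := by
    ext p
    constructor
    · rintro ⟨hp, hpu⟩
      refine ⟨hp, fun hpv => ?_⟩
      have : p ∈ S ∩ (U ∩ V) := ⟨hp, hpu, hpv⟩
      rw [hem] at this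
      exact this
    · rintro ⟨hp, hpv⟩
      rcases hcov hp with h | h
      · exact ⟨hp, h⟩
      · exact absurd h hpv
  have hSV : S ∩ V = S \ U := by
    ext p
    constructor
    · rintro ⟨hp, hpv⟩
      refine ⟨hp, fun hpu => ?_⟩
      have : p ∈ S ∩ (U ∩ V) := ⟨hp, hpu, hpv⟩
      rw [hem] at this
      exact this
    · rintro ⟨hp, hpu⟩
      rcases hcov hp with h | h
      · exact absurd h hpu
      · exact ⟨hp, h⟩
  have hcU : IsCompact (S ∩ U) := by
    rw [hSU]
    exact (hS.inter hV.isClosed_compl).isCompact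
  have hcV : IsCompact (S ∩ V) := by
    rw [hSV]
    exact (hS.inter hU.isClosed_compl).isCompact
  set TU := Prod.snd '' (S ∩ U) with hTU
  set TV := Prod.snd '' (S ∩ V) with hTV
  have hTUc : IsClosed TU := (hcU.image continuous_snd).isClosed
  have hTVc : IsClosed TV := (hcV.image continuous_snd).isClosed
  have hTcov : TU ∪ TV = univ := by
    apply eq_univ_of_forall
    intro t
    obtain ⟨z, hz⟩ := hne t
    rcases hcov hz with h | h
    · exact Or.inl ⟨(z, t), ⟨hz, h⟩, rfl⟩
    · exact Or.inr ⟨(z, t), ⟨hz, h⟩, rfl⟩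
  have hTdisj : TU ∩ TV = ∅ := by
    rw [eq_empty_iff_forall_notMem]
    rintro t ⟨⟨p, hp, hpt⟩, ⟨q, hq, hqt⟩⟩
    apply hsplit t p.1 q.1
    · rw [show (p.1, t) = p from by rw [← hpt]]
      exact hp
    · rw [show (q.1, t) = q from by rw [← hqt]]
      exact hq
  have hTUclopen : IsClopen TU := by
    refine ⟨hTUc, ?_⟩
    have : TU = TVᶜ := by
      ext t
      constructor
      · intro ht htv
        have : t ∈ TU ∩ TV := ⟨ht, htv⟩
        rw [hTdisj] at this
        exact this
      · intro ht
        rcases (eq_univ_iff_forall.1 hTcov) t with h | h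
        · exact h
        · exact absurd h ht
    rw [this]
    exact hTVc.isOpen_compl
  rcases isClopen_iff.1 hTUclopen with h | h
  · obtain ⟨p, hp⟩ := hne1
    have : p.2 ∈ TU := ⟨p, ⟨hp.1, hp.2⟩, rfl⟩
    rw [h] at this
    exact this
  · obtain ⟨p, hp⟩ := hne2
    have hp2 : p.2 ∈ TV := ⟨p, ⟨hp.1, hp.2⟩, rfl⟩
    have hp1 : p.2 ∈ TU := by rw [h]; trivial
    have : p.2 ∈ TU ∩ TV := ⟨hp1, hp2⟩
    rw [hTdisj] at this
    exact this

lemma level_preconn {L : ℝ → ℝ} (hmono : Monotone L) (y : ℝ) :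
    IsPreconnected {x | L x = y} := by
  have hoc : Set.OrdConnected {x | L x = y} := by
    constructor
    intro a ha b hb z hz
    simp only [mem_setOf_eq] at *
    exact le_antisymm (by rw [← hb]; exact hmono hz.2) (by rw [← ha]; exact hmono hz.1)
  exact hoc.isPreconnected

/-- core construction in the degree-one case -/
lemma core {f g : Circle → Circle} {K : Circle × unitInterval → Circle}
    (hfm : ∀ w, IsPreconnected (f ⁻¹' {w})) (hgm : ∀ w, IsPreconnected (g ⁻¹' {w}))
    (hKc : Continuous K) (hK0 : ∀ z, K (z, 0) = f z) (hK1 : ∀ z, K (z, 1) = g z)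
    {F : ℝ → ℝ} (hFc : Continuous F) (hF : ∀ x, ee (F x) = f (ee x))
    (hsh : ∀ x, F (x + 2*Real.pi) = F x + 2*Real.pi) :
    ∃ H : Circle × unitInterval → Circle, Continuous H ∧
      (∀ z, H (z, 0) = f z) ∧ (∀ z, H (z, 1) = g z) ∧
      (∀ w : Circle, IsPreconnected (H ⁻¹' {w})) := by
  obtain ⟨G, hGc, hG, hGsh⟩ := chain hKc hK0 hK1 hFc hF hsh
  have hFmono : Monotone F := lift_mono hfm hFc hF hsh
  have hGmono : Monotone G := lift_mono hgm hGc hG hGsh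
  set Kh : ℝ → unitInterval → ℝ := fun x t => (1 - (t:ℝ)) * F x + (t:ℝ) * G x with hKh
  have hKh_shift : ∀ (x : ℝ) (t : unitInterval), Kh (x + 2*Real.pi) t = Kh x t + 2*Real.pi := by
    intro x t
    simp only [hKh]
    rw [hsh, hGsh]
    ring
  have hKh_shift_int : ∀ (n : ℤ) (x : ℝ) (t : unitInterval),
      Kh (x + n*(2*Real.pi)) t = Kh x t + n*(2*Real.pi) := by
    intro n x t
    exact shift_int (L := fun x => Kh x t) (c := 2*Real.pi) (fun x => hKh_shift x t) n x
  have hKh_mono : ∀ t : unitInterval, Monotone (fun x => Kh x t) := by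
    intro t a b hab
    have h1 : (0:ℝ) ≤ 1 - (t:ℝ) := by linarith [t.2.2]
    have h2 : (0:ℝ) ≤ (t:ℝ) := t.2.1
    simp only [hKh]
    have hFab := hFmono hab
    have hGab := hGmono hab
    nlinarith
  have hKh_cont : Continuous (fun p : ℝ × unitInterval => Kh p.1 p.2) := by
    apply Continuous.add
    · exact (continuous_const.sub (continuous_subtype_val.comp continuous_snd)).mul
        (hFc.comp continuous_fst)
    · exact (continuous_subtype_val.comp continuous_snd).mul (hGc.comp continuous_fst)
  have hcong : ∀ (x y : ℝ) (t : unitInterval), ee x = ee y → ee (Kh x t) = ee (Kh y t) := by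
    intro x y t hxy
    obtain ⟨m, hm⟩ := ee_eq_iff.1 hxy
    rw [hm, hKh_shift_int]
    exact ee_int _ m
  set H : Circle × unitInterval → Circle := fun p => ee (Kh (Complex.arg p.1) p.2) with hH
  have hHe : ∀ (x : ℝ) (t : unitInterval), H (ee x, t) = ee (Kh x t) := by
    intro x t
    simp only [hH]
    exact hcong _ _ t (by rw [ee_arg])
  have hq : Topology.IsQuotientMap (fun p : ℝ × unitInterval => ((ee p.1 : Circle), p.2)) := by
    apply IsOpenMap.isQuotientMap
    · exact (isLocalHomeomorph_circleExp.isOpenMap).prodMap IsOpenMap.id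
    · exact (ee_cont.comp continuous_fst).prodMk continuous_snd
    · rintro ⟨z, t⟩
      exact ⟨(Complex.arg z, t), by simp only; rw [ee_arg]⟩
  have hHc : Continuous H := by
    rw [hq.continuous_iff]
    have heq : (H ∘ (fun p : ℝ × unitInterval => ((ee p.1 : Circle), p.2))) =
        fun p : ℝ × unitInterval => ee (Kh p.1 p.2) := by
      funext p
      exact hHe p.1 p.2
    rw [heq]
    exact ee_cont.comp hKh_cont
  refine ⟨H, hHc, ?_, ?_, ?_⟩
  · intro z
    have h0 : Kh (Complex.arg z) 0 = F (Complex.arg z) := by simp [hKh]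
    simp only [hH, h0]
    rw [hF, ee_arg]
  · intro z
    have h1 : Kh (Complex.arg z) 1 = G (Complex.arg z) := by simp [hKh]
    simp only [hH, h1]
    rw [hG, ee_arg]
  · intro w
    set y := Complex.arg w with hy
    have hw : ee y = w := ee_arg w
    apply preconn_of_slices
    · exact IsClosed.preimage hHc isClosed_singleton
    · intro t
      have hLc : Continuous fun x => Kh x t :=
        hKh_cont.comp (continuous_id.prodMk continuous_const)
      obtain ⟨n1, hn1⟩ := exists_int_lt ((y - Kh 0 t)/(2*Real.pi))
      obtain ⟨n2, hn2⟩ := exists_int_gt ((y - Kh 0 t)/(2*Real.pi))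
      have hv1 : Kh ((n1:ℝ)*(2*Real.pi)) t ≤ y := by
        have h1 := hKh_shift_int n1 0 t
        rw [zero_add] at h1
        rw [h1]
        have := (lt_div_iff₀ two_pi_pos).1 hn1
        linarith
      have hv2 : y ≤ Kh ((n2:ℝ)*(2*Real.pi)) t := by
        have h1 := hKh_shift_int n2 0 t
        rw [zero_add] at h1
        rw [h1]
        have := (div_lt_iff₀ two_pi_pos).1 hn2
        linarith
      obtain ⟨x, hx⟩ := intermediate_value_univ ((n1:ℝ)*(2*Real.pi)) ((n2:ℝ)*(2*Real.pi)) hLc ⟨hv1, hv2⟩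
      have hx' : Kh x t = y := hx
      refine ⟨ee x, ?_⟩
      simp only [mem_preimage, mem_singleton_iff]
      rw [hHe x t, hx', hw]
    · intro t
      have himg : {z : Circle | (z, t) ∈ H ⁻¹' {w}} = ee '' {x : ℝ | Kh x t = y} := by
        ext z
        simp only [mem_setOf_eq, mem_preimage, mem_singleton_iff, mem_image]
        constructor
        · intro hz
          have h1 : H (ee (Complex.arg z), t) = w := by rw [ee_arg]; exact hz
          rw [hHe] at h1
          rw [← hw] at h1
          obtain ⟨m, hm⟩ := ee_eq_iff.1 h1
          refine ⟨Complex.arg z + ((-m : ℤ):ℝ)*(2*Real.pi), ?_, ?_⟩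
          · rw [hKh_shift_int (-m) (Complex.arg z) t]
            push_cast
            push_cast at hm
            linarith
          · rw [ee_int, ee_arg]
        · rintro ⟨x, hx, rfl⟩
          rw [hHe x t, hx, hw]
      rw [himg]
      exact (level_preconn (hKh_mono t) y).image _ ee_cont.continuousOn

/-- construction in the constant (degree-zero) case -/
lemma core_const {f g : Circle → Circle} {K : Circle × unitInterval → Circle}
    (hfm : ∀ w, IsPreconnected (f ⁻¹' {w})) (hgm : ∀ w, IsPreconnected (g ⁻¹' {w}))
    (hKc : Continuous K) (hK0 : ∀ z, K (z, 0) = f z) (hK1 : ∀ z, K (z, 1) = g z)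
    {F : ℝ → ℝ} (hFc : Continuous F) (hF : ∀ x, ee (F x) = f (ee x))
    (hsh : ∀ x, F (x + 2*Real.pi) = F x) :
    ∃ H : Circle × unitInterval → Circle, Continuous H ∧
      (∀ z, H (z, 0) = f z) ∧ (∀ z, H (z, 1) = g z) ∧
      (∀ w : Circle, IsPreconnected (H ⁻¹' {w})) := by
  have hsh' : ∀ x, F (x + 2*Real.pi) = F x + 0 := by simpa using hsh
  obtain ⟨G, hGc, hG, hGsh⟩ := chain hKc hK0 hK1 hFc hF hsh'
  have hfconst : ∀ z, f z = f 1 := lift_const hfm hFc hF hsh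
  have hgconst : ∀ z, g z = g 1 := lift_const hgm hGc hG (fun x => by simpa using hGsh x)
  set n0 : ℤ := round ((G 0 - F 0)/(2*Real.pi)) with hn0
  set α := F 0 with hα
  set β := G 0 - (n0 : ℝ) * (2*Real.pi) with hβ
  have hβα : |β - α| ≤ Real.pi := by
    have h1 : |(G 0 - F 0)/(2*Real.pi) - (n0:ℝ)| ≤ 1/2 := by rw [hn0]; exact abs_sub_round _
    have h2 : β - α = ((G 0 - F 0)/(2*Real.pi) - (n0:ℝ)) * (2*Real.pi) := by
      rw [hβ, hα]; field_simp; ring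
    rw [h2, abs_mul, _root_.abs_of_pos two_pi_pos]
    nlinarith [abs_nonneg ((G 0 - F 0)/(2*Real.pi) - (n0:ℝ)), two_pi_pos, h1]
  set ℓ : ℝ → ℝ := fun s => (1 - s)*α + s*β with hℓ
  have hℓc : Continuous ℓ := by rw [hℓ]; fun_prop
  set H : Circle × unitInterval → Circle := fun p => ee (ℓ (p.2:ℝ)) with hH
  have hHc : Continuous H := by
    rw [hH]
    exact ee_cont.comp (hℓc.comp (continuous_subtype_val.comp continuous_snd))
  refine ⟨H, hHc, ?_, ?_, ?_⟩
  · intro z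
    have h0 : H (z, 0) = ee α := by
      simp only [hH]
      norm_num [hℓ]
    rw [h0, hα, hF 0, ee_zero]
    exact (hfconst z).symm
  · intro z
    have h1 : H (z, 1) = ee β := by
      simp only [hH]
      norm_num [hℓ]
    have h2 : ee β = ee (G 0) := by
      rw [show β = G 0 + ((-n0 : ℤ):ℝ)*(2*Real.pi) by rw [hβ]; push_cast; ring]
      exact ee_int _ _
    rw [h1, h2, hG 0, ee_zero]
    exact (hgconst z).symm
  · intro w
    by_cases hT : ∃ t : unitInterval, ee (ℓ (t:ℝ)) = w
    · have hprod : H ⁻¹' {w} = (univ : Set Circle) ×ˢ {t : unitInterval | ee (ℓ (t:ℝ)) = w} := by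
        ext p
        simp only [hH, mem_preimage, mem_singleton_iff, mem_prod, mem_univ, true_and, mem_setOf_eq]
      rw [hprod]
      apply IsPreconnected.prod
      · have huniv : (univ : Set Circle) = ee '' univ := by
          ext z
          simp only [mem_univ, mem_image, true_iff]
          exact ⟨Complex.arg z, trivial, ee_arg z⟩
        rw [huniv]
        exact isPreconnected_univ.image _ ee_cont.continuousOn
      · apply (Topology.IsInducing.subtypeVal.isPreconnected_image).1
        have himg : Subtype.val '' {t : unitInterval | ee (ℓ (t:ℝ)) = w}
            = {s : ℝ | s ∈ Icc (0:ℝ) 1 ∧ ee (ℓ s) = w} := by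
          ext s
          simp only [mem_image, mem_setOf_eq]
          constructor
          · rintro ⟨⟨s', hs'⟩, h1, rfl⟩
            exact ⟨hs', h1⟩
          · rintro ⟨hs, h1⟩
            exact ⟨⟨s, hs⟩, h1, rfl⟩
        rw [himg]
        apply Set.OrdConnected.isPreconnected
        constructor
        rintro s1 ⟨hs1I, hs1⟩ s2 ⟨hs2I, hs2⟩ s hs
        have hsI : s ∈ Icc (0:ℝ) 1 := ⟨le_trans hs1I.1 hs.1, le_trans hs.2 hs2I.2⟩
        refine ⟨hsI, ?_⟩
        have hval1 : ℓ s1 = ℓ s2 := by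
          by_contra hneq
          apply ee_ne_of hneq ?_ (hs1.trans hs2.symm)
          have hd : ℓ s1 - ℓ s2 = (s2 - s1)*(α - β) := by rw [hℓ]; ring
          rw [hd, abs_mul]
          have h01 : |s2 - s1| ≤ 1 := by
            rw [abs_le]
            constructor <;> linarith [hs1I.1, hs1I.2, hs2I.1, hs2I.2]
          have h02 : |α - β| ≤ Real.pi := by rw [abs_sub_comm]; exact hβα
          nlinarith [abs_nonneg (s2 - s1), abs_nonneg (α - β), Real.pi_pos]
        have hconst : ℓ s = ℓ s1 := by
          have h2 : ℓ s2 - ℓ s1 = (s2 - s1)*(β - α) := by rw [hℓ]; ring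
          have h3 : (s2 - s1)*(β - α) = 0 := by rw [← h2, hval1]; ring
          rcases mul_eq_zero.1 h3 with h4 | h4
          · have hss : s = s1 := le_antisymm (by linarith [hs.2]) hs.1
            rw [hss]
          · have h5 : ℓ s - ℓ s1 = (s1 - s)*(α - β) := by rw [hℓ]; ring
            have h6 : α - β = 0 := by linarith
            rw [h6, mul_zero] at h5
            linarith
        rw [hconst]
        exact hs1
    · push_neg at hT
      have hempty : H ⁻¹' {w} = ∅ := by
        rw [eq_empty_iff_forall_notMem]
        intro p hp
        exact hT p.2 hp
      rw [hempty]
      exact isPreconnected_empty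

/-- transport of fiber-preconnectedness along the inversion of the cylinder -/
lemma fiber_invmap {Hp : Circle × unitInterval → Circle}
    (hm : ∀ w, IsPreconnected (Hp ⁻¹' {w})) :
    ∀ w, IsPreconnected ((fun p : Circle × unitInterval => Hp (p.1⁻¹, p.2)) ⁻¹' {w}) := by
  intro w
  have himg : (fun p : Circle × unitInterval => Hp (p.1⁻¹, p.2)) ⁻¹' {w}
      = (fun p : Circle × unitInterval => ((p.1⁻¹ : Circle), p.2)) '' (Hp ⁻¹' {w}) := by
    ext p
    simp only [mem_preimage, mem_singleton_iff, mem_image]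
    constructor
    · intro hp
      exact ⟨(p.1⁻¹, p.2), hp, by simp⟩
    · rintro ⟨q, hq, hqe⟩
      rw [← hqe]
      simpa using hq
  rw [himg]
  exact (hm w).image _ ((continuous_inv.comp continuous_fst).prodMk continuous_snd).continuousOn

end MonCirc

open MonCirc in
/-- Two homotopic monotone continuous self-maps of the circle are joined by a monotone
homotopy on the cylinder `S¹ × [0,1]`: a continuous homotopy all of whose point-preimages
are connected. -/
theorem monotone_homotopy_between_monotone_circle_maps
    (f g : Circle → Circle) (hfc : Continuous f) (hgc : Continuous g)
    (hfm : ∀ w : Circle, IsPreconnected (f ⁻¹' {w}))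
    (hgm : ∀ w : Circle, IsPreconnected (g ⁻¹' {w}))
    (hhom : ∃ K : Circle × unitInterval → Circle, Continuous K ∧
      (∀ z, K (z, 0) = f z) ∧ (∀ z, K (z, 1) = g z)) :
    ∃ H : Circle × unitInterval → Circle, Continuous H ∧
      (∀ z, H (z, 0) = f z) ∧ (∀ z, H (z, 1) = g z) ∧
      (∀ w : Circle, IsPreconnected (H ⁻¹' {w})) := by
  classical
  obtain ⟨K, hKc, hK0, hK1⟩ := hhom
  obtain ⟨δ, hδpos, hδ⟩ := exists_delta hfc
  obtain ⟨F, hFc, hF⟩ := lift_exists (φ := fun x => f (ee x)) hδpos hδ (hfc.comp ee_cont)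
  have hFper : ∀ x, ee (F (x + 2*Real.pi)) = ee (F x) := by
    intro x
    rw [hF, hF, ee_periodic]
  obtain ⟨c, ⟨m, hmc⟩, hsh⟩ := shift_const hFc hFper
  rcases lt_trichotomy m 0 with hm | hm | hm
  · -- negative degree: reflect the circle
    set f' : Circle → Circle := fun z => f z⁻¹ with hf'
    set g' : Circle → Circle := fun z => g z⁻¹ with hg'
    set K' : Circle × unitInterval → Circle := fun p => K (p.1⁻¹, p.2) with hK'
    have hK'c : Continuous K' :=
      hKc.comp ((continuous_inv.comp continuous_fst).prodMk continuous_snd)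
    have hK'0 : ∀ z, K' (z, 0) = f' z := fun z => hK0 z⁻¹
    have hK'1 : ∀ z, K' (z, 1) = g' z := fun z => hK1 z⁻¹
    set F' : ℝ → ℝ := fun x => F (-x) with hFr
    have hF'c : Continuous F' := hFc.comp continuous_neg
    have hF'lift : ∀ x, ee (F' x) = f' (ee x) := by
      intro x
      simp only [hFr, hf']
      rw [hF, ee_neg]
    have hF'sh : ∀ x, F' (x + 2*Real.pi) = F' x + (-c) := by
      intro x
      have h1 := hsh (-x - 2*Real.pi)
      rw [show -x - 2*Real.pi + 2*Real.pi = -x by ring] at h1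
      simp only [hFr]
      rw [show -(x + 2*Real.pi) = -x - 2*Real.pi by ring]
      linarith
    rcases eq_or_lt_of_le (show m ≤ -1 by omega) with hm1 | hm1
    · -- m = -1
      have hF'sh2 : ∀ x, F' (x + 2*Real.pi) = F' x + 2*Real.pi := by
        intro x
        rw [hF'sh, hmc, hm1]
        push_cast
        ring
      obtain ⟨H', hH'c, hH'0, hH'1, hH'm⟩ :=
        core (fiber_inv hfm) (fiber_inv hgm) hK'c hK'0 hK'1 hF'c hF'lift hF'sh2
      refine ⟨fun p => H' (p.1⁻¹, p.2),
        hH'c.comp ((continuous_inv.comp continuous_fst).prodMk continuous_snd),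
        ?_, ?_, fiber_invmap hH'm⟩
      · intro z
        have h1 := hH'0 z⁻¹
        simpa [hf'] using h1
      · intro z
        have h1 := hH'1 z⁻¹
        simpa [hg'] using h1
    · -- m ≤ -2
      exact absurd (lift_not_big (fiber_inv hfm) hF'c hF'lift hF'sh
        ⟨-m, by rw [hmc]; push_cast; ring⟩
        (by
          rw [hmc]
          have : (m:ℝ) ≤ -2 := by exact_mod_cast (by omega : m ≤ -2)
          nlinarith [Real.pi_pos])) (by simp)
  · -- degree 0
    have hsh0 : ∀ x, F (x + 2*Real.pi) = F x := by
      intro x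
      rw [hsh, hmc, hm]
      push_cast
      ring
    exact core_const hfm hgm hKc hK0 hK1 hFc hF hsh0
  · -- positive degree
    rcases eq_or_lt_of_le (show 1 ≤ m by omega) with hm1 | hm1
    · have hsh1 : ∀ x, F (x + 2*Real.pi) = F x + 2*Real.pi := by
        intro x
        rw [hsh, hmc, ← hm1]
        push_cast
        ring
      exact core hfm hgm hKc hK0 hK1 hFc hF hsh1
    · exact absurd (lift_not_big hfm hFc hF hsh ⟨m, hmc⟩
        (by
          rw [hmc]
          have : (2:ℝ) ≤ (m:ℝ) := by exact_mod_cast (by omega : 2 ≤ m)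
          nlinarith [Real.pi_pos])) (by simp)
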